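/- For n = 3m+1 and weights (a_1,a_2,a_3,a_4) = (1,1,1,3m-2) with m ≥ 1, the number of k in {1,...,n-1} with age(k) = 1 is m, i.e., h^{1,1} = m, and likewise h^{2,2} = m and h^{3,3} = m. -/

import Mathlib

open scoped Classical

noncomputable def age (n : ℕ) (a : Fin 4 → ℤ) (k : ℕ) : ℝ :=
  ∑ μ : Fin 4, Int.fract ((k : ℝ) * (a μ : ℝ) / (n : ℝ))

noncomputable def hpp (n : ℕ) (a : Fin 4 → ℤ) (p : ℕ) : ℕ :=
  ((Finset.Icc 1 (n - 1)).filter (fun k => age n a k = p)).card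

lemma age_eq (m k : ℕ) (hm : 1 ≤ m) (hk1 : 1 ≤ k) (hk2 : k ≤ 3*m) :
    age (3*m+1) ![1,1,1,3*(m:ℤ)-2] k
      = -(⌊(-(3*(k:ℝ))) / (3*(m:ℝ)+1)⌋ : ℤ) := by
  have hn : (0:ℝ) < 3*(m:ℝ)+1 := by positivity
  have hk2' : (k:ℝ) ≤ 3*(m:ℝ) := by exact_mod_cast hk2
  have hk1' : (1:ℝ) ≤ (k:ℝ) := by exact_mod_cast hk1
  simp only [age, Fin.sum_univ_four, Matrix.cons_val_zero, Matrix.cons_val_one,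
    Matrix.head_cons, Matrix.cons_val_two, Matrix.tail_cons, Matrix.cons_val_three]
  push_cast
  have h1 : Int.fract ((k:ℝ) * 1 / (3*(m:ℝ)+1)) = (k:ℝ) / (3*(m:ℝ)+1) := by
    rw [mul_one, Int.fract_eq_self]
    exact ⟨by positivity, by rw [div_lt_one hn]; linarith⟩
  have h2 : (k:ℝ) * (3*(m:ℝ)-2) / (3*(m:ℝ)+1)
      = (-(3*(k:ℝ))) / (3*(m:ℝ)+1) + (k:ℤ) := by
    field_simp; push_cast; ring
  have h3 : Int.fract ((k:ℝ) * (3*(m:ℝ)-2) / (3*(m:ℝ)+1))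
      = Int.fract ((-(3*(k:ℝ))) / (3*(m:ℝ)+1)) := by
    rw [h2, Int.fract_add_intCast]
  rw [h1, h3, Int.fract]
  have : (-(3*(k:ℝ))) / (3*(m:ℝ)+1) = -((k:ℝ)/(3*(m:ℝ)+1)) * 3 := by ring
  rw [this]; ring

lemma age_val (m k : ℕ) (hm : 1 ≤ m) (hk1 : 1 ≤ k) (hk2 : k ≤ 3*m) :
    age (3*m+1) ![1,1,1,3*(m:ℤ)-2] k
      = if k ≤ m then 1 else if k ≤ 2*m then 2 else 3 := by
  have hn : (0:ℝ) < 3*(m:ℝ)+1 := by positivity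
  have hk1' : (1:ℝ) ≤ (k:ℝ) := by exact_mod_cast hk1
  rw [age_eq m k hm hk1 hk2]
  split_ifs with h h'
  · have hb : (k:ℝ) ≤ (m:ℝ) := by exact_mod_cast h
    have : ⌊(-(3*(k:ℝ))) / (3*(m:ℝ)+1)⌋ = -1 := by
      rw [Int.floor_eq_iff]
      constructor
      · rw [le_div_iff₀ hn]; push_cast; nlinarith
      · rw [div_lt_iff₀ hn]; push_cast; nlinarith
    rw [this]; norm_num
  · have hb : (k:ℝ) ≤ 2*(m:ℝ) := by exact_mod_cast h'
    have hb2 : (m:ℝ) + 1 ≤ (k:ℝ) := by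
      have : m + 1 ≤ k := by omega
      exact_mod_cast this
    have : ⌊(-(3*(k:ℝ))) / (3*(m:ℝ)+1)⌋ = -2 := by
      rw [Int.floor_eq_iff]
      constructor
      · rw [le_div_iff₀ hn]; push_cast; nlinarith
      · rw [div_lt_iff₀ hn]; push_cast; nlinarith
    rw [this]; norm_num
  · have hb : (k:ℝ) ≤ 3*(m:ℝ) := by exact_mod_cast hk2
    have hb2 : 2*(m:ℝ) + 1 ≤ (k:ℝ) := by
      have : 2*m + 1 ≤ k := by omega
      exact_mod_cast this
    have : ⌊(-(3*(k:ℝ))) / (3*(m:ℝ)+1)⌋ = -3 := by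
      rw [Int.floor_eq_iff]
      constructor
      · rw [le_div_iff₀ hn]; push_cast; nlinarith
      · rw [div_lt_iff₀ hn]; push_cast; nlinarith
    rw [this]; norm_num

theorem hodge_numbers_A_series (m : ℕ) (hm : 1 ≤ m) :
    hpp (3 * m + 1) ![1, 1, 1, 3 * (m : ℤ) - 2] 1 = m ∧
    hpp (3 * m + 1) ![1, 1, 1, 3 * (m : ℤ) - 2] 2 = m ∧
    hpp (3 * m + 1) ![1, 1, 1, 3 * (m : ℤ) - 2] 3 = m := by
  have hsub : 3 * m + 1 - 1 = 3 * m := by omega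
  refine ⟨?_, ?_, ?_⟩
  · unfold hpp
    rw [hsub]
    have : (Finset.Icc 1 (3*m)).filter
        (fun k => age (3*m+1) ![1,1,1,3*(m:ℤ)-2] k = (1:ℕ)) = Finset.Icc 1 m := by
      ext k
      simp only [Finset.mem_filter, Finset.mem_Icc]
      constructor
      · rintro ⟨⟨h1, h2⟩, h3⟩
        refine ⟨h1, ?_⟩
        by_contra hc
        rw [age_val m k hm h1 h2] at h3
        split_ifs at h3 <;> norm_num at h3 <;> omega
      · rintro ⟨h1, h2⟩
        have h2' : k ≤ 3*m := by omega
        refine ⟨⟨h1, h2'⟩, ?_⟩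
        rw [age_val m k hm h1 h2', if_pos h2]; norm_num
    rw [this, Nat.card_Icc]; omega
  · unfold hpp
    rw [hsub]
    have : (Finset.Icc 1 (3*m)).filter
        (fun k => age (3*m+1) ![1,1,1,3*(m:ℤ)-2] k = (2:ℕ)) = Finset.Icc (m+1) (2*m) := by
      ext k
      simp only [Finset.mem_filter, Finset.mem_Icc]
      constructor
      · rintro ⟨⟨h1, h2⟩, h3⟩
        rw [age_val m k hm h1 h2] at h3
        split_ifs at h3 with ha hb <;> norm_num at h3 <;> omega
      · rintro ⟨h1, h2⟩
        have h1' : 1 ≤ k := by omega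
        have h2' : k ≤ 3*m := by omega
        refine ⟨⟨h1', h2'⟩, ?_⟩
        rw [age_val m k hm h1' h2', if_neg (by omega), if_pos h2]; norm_num
    rw [this, Nat.card_Icc]; omega
  · unfold hpp
    rw [hsub]
    have : (Finset.Icc 1 (3*m)).filter
        (fun k => age (3*m+1) ![1,1,1,3*(m:ℤ)-2] k = (3:ℕ)) = Finset.Icc (2*m+1) (3*m) := by
      ext k
      simp only [Finset.mem_filter, Finset.mem_Icc]
      constructor
      · rintro ⟨⟨h1, h2⟩, h3⟩
        rw [age_val m k hm h1 h2] at h3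
        split_ifs at h3 with ha hb <;> norm_num at h3 <;> omega
      · rintro ⟨h1, h2⟩
        have h1' : 1 ≤ k := by omega
        refine ⟨⟨h1', h2⟩, ?_⟩
        rw [age_val m k hm h1' h2, if_neg (by omega), if_neg (by omega)]; norm_num
    rw [this, Nat.card_Icc]; omega
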